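/- Let G be a simple graph and let e be a bridge of G. Then for all vertices a and b, a and b are biconnected in G if and only if a and b are biconnected in the graph obtained from G by deleting e. -/

import Mathlib

/-- Two vertices `a` and `b` of a simple graph `H` are *biconnected* in `H` if `a ≠ b` and
there exist two distinct paths from `a` to `b` in `H` whose only common vertices are
`a` and `b`. -/
def Biconnected {V : Type*} (H : SimpleGraph V) (a b : V) : Prop :=
  a ≠ b ∧ ∃ p q : H.Path a b, p ≠ q ∧
    ∀ x, x ∈ p.1.support → x ∈ q.1.support → (x = a ∨ x = b)

open SimpleGraph Walk in
/-- A path from `a` to `b` containing the edge `s(a, b)` is the single edge. -/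
private lemma path_eq_single {V : Type*} {G : SimpleGraph V} {a b : V} {p : G.Walk a b}
    (hp : p.IsPath) (he : s(a, b) ∈ p.edges) : ∃ h : G.Adj a b, p = Walk.cons h Walk.nil := by
  cases p with
  | nil => simp at he
  | @cons _ c _ h' p' =>
    rw [Walk.edges_cons, List.mem_cons] at he
    rw [Walk.cons_isPath_iff] at hp
    rcases he with he | he
    · rw [Sym2.eq_iff] at he
      rcases he with ⟨-, rfl⟩ | ⟨rfl, rfl⟩
      · have : p' = Walk.nil := Walk.isPath_iff_eq_nil.mp hp.1
        exact ⟨h', by rw [this]⟩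
      · exact absurd rfl h'.ne
    · exact absurd (p'.fst_mem_support_of_mem_edges he) hp.2

open SimpleGraph Walk in
/-- Two distinct internally disjoint paths between distinct vertices form a cycle. -/
private lemma two_paths_cycle {V : Type*} {G : SimpleGraph V} {a b : V}
    (hab : a ≠ b) (p q : G.Path a b) (hpq : p ≠ q)
    (hsupp : ∀ x, x ∈ p.1.support → x ∈ q.1.support → (x = a ∨ x = b)) :
    (p.1.append q.1.reverse).IsCycle := by
  rw [Walk.isCycle_def]
  refine ⟨?_, ?_, ?_⟩
  · -- trail
    rw [Walk.isTrail_def, Walk.edges_append, Walk.edges_reverse]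
    rw [List.nodup_append]
    refine ⟨p.2.isTrail.edges_nodup, List.nodup_reverse.mpr q.2.isTrail.edges_nodup, ?_⟩
    intro f hfP f' hfQ hff'
    subst hff'
    rw [List.mem_reverse] at hfQ
    induction f using Sym2.ind with
    | _ x y =>
      have hxy : x ≠ y := (p.1.edges_subset_edgeSet hfP).ne
      have hx := hsupp x (p.1.fst_mem_support_of_mem_edges hfP)
        (q.1.fst_mem_support_of_mem_edges hfQ)
      have hy := hsupp y (p.1.snd_mem_support_of_mem_edges hfP)
        (q.1.snd_mem_support_of_mem_edges hfQ)
      have hfab : s(x, y) = s(a, b) := by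
        rcases hx with rfl | rfl <;> rcases hy with rfl | rfl <;>
          first | exact absurd rfl hxy | exact absurd rfl hab.symm | rw [Sym2.eq_swap]
      rw [hfab] at hfP hfQ
      obtain ⟨h1, hP1⟩ := path_eq_single p.2 hfP
      obtain ⟨h2, hQ1⟩ := path_eq_single q.2 hfQ
      exact hpq (Subtype.ext (hP1.trans hQ1.symm))
  · -- nonempty
    intro hnil
    have hb : b ∈ (p.1.append q.1.reverse).support :=
      Walk.subset_support_append_left _ _ p.1.end_mem_support
    rw [hnil] at hb
    simp at hb
    exact hab hb.symm
  · -- internal vertices nodup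
    rw [Walk.tail_support_append, List.nodup_append]
    refine ⟨(List.tail_sublist _).nodup p.2.support_nodup,
      (List.tail_sublist _).nodup q.2.reverse.support_nodup, ?_⟩
    intro x hx1 y hx2 hxy
    subst hxy
    have hxP : x ∈ p.1.support := List.mem_of_mem_tail hx1
    have hxQ : x ∈ q.1.support := by
      have : x ∈ q.1.reverse.support := List.mem_of_mem_tail hx2
      rwa [Walk.support_reverse, List.mem_reverse] at this
    rcases hsupp x hxP hxQ with rfl | rfl
    · have := p.2.support_nodup
      rw [p.1.support_eq_cons] at this
      exact this.notMem hx1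
    · have := q.2.reverse.support_nodup
      rw [q.1.reverse.support_eq_cons] at this
      exact this.notMem hx2

/-- Let `G` be a simple graph and let `e` be a bridge of `G`. Then for all vertices `a` and
`b`, `a` and `b` are biconnected in `G` if and only if `a` and `b` are biconnected in the
graph obtained from `G` by deleting `e`. -/
theorem bridge_delete_biconnected {V : Type*} (G : SimpleGraph V) (e : Sym2 V)
    (he : G.IsBridge e) (a b : V) :
    Biconnected G a b ↔ Biconnected (G.deleteEdges {e}) a b := by
  constructor
  · rintro ⟨hab, p, q, hpq, hsupp⟩
    have hcyc := two_paths_cycle hab p q hpq hsupp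
    have hew : e ∉ (p.1.append q.1.reverse).edges := by
      by_cases hmem : e ∈ G.edgeSet
      · exact (SimpleGraph.isBridge_iff_forall_cycle_notMem hmem).mp he _ hcyc
      · exact fun h => hmem ((p.1.append q.1.reverse).edges_subset_edgeSet h)
    rw [SimpleGraph.Walk.edges_append, List.mem_append, SimpleGraph.Walk.edges_reverse,
      List.mem_reverse] at hew
    push_neg at hew
    have heP : e ∉ p.1.edges := hew.1
    have heQ : e ∉ q.1.edges := hew.2
    refine ⟨hab, ⟨p.1.toDeleteEdge e heP, p.2.transfer _⟩,
      ⟨q.1.toDeleteEdge e heQ, q.2.transfer _⟩, ?_, ?_⟩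
    · intro h
      apply hpq
      have h' := congrArg Subtype.val h
      simp only at h'
      have := congrArg
        (SimpleGraph.Walk.map (SimpleGraph.Hom.ofLE (G.deleteEdges_le {e}))) h'
      rw [SimpleGraph.Walk.map_toDeleteEdges_eq, SimpleGraph.Walk.map_toDeleteEdges_eq] at this
      exact Subtype.ext this
    · intro x hx1 hx2
      rw [SimpleGraph.Walk.support_transfer] at hx1 hx2
      exact hsupp x hx1 hx2
  · rintro ⟨hab, p, q, hpq, hsupp⟩
    have hle := G.deleteEdges_le {e}
    have hinj : Function.Injective (SimpleGraph.Hom.ofLE hle) :=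
      fun x y h => h
    refine ⟨hab, SimpleGraph.Path.map _ hinj p, SimpleGraph.Path.map _ hinj q, ?_, ?_⟩
    · intro h
      exact hpq (SimpleGraph.Path.map_injective hinj a b h)
    · intro x hx1 hx2
      simp only [SimpleGraph.Path.map, SimpleGraph.Walk.support_map, List.mem_map,
        SimpleGraph.Hom.coe_ofLE, id_eq] at hx1 hx2
      obtain ⟨y, hy, rfl⟩ := hx1
      obtain ⟨z, hz, hzx⟩ := hx2
      exact hsupp _ hy (hzx ▸ hz)
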